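/- Let G ⊊ ℝⁿ be a proper subdomain, z ∈ G with d(z) = dist(z, ∂G) > 0, and 0 < λ < 1. Then for all x, y in the open ball 𝔹ⁿ(z, λ·d(z)), s_{𝔹ⁿ(z,d(z))}(x,y) ≤ ((1+2λ)/(2(1−λ))) · j_{𝔹ⁿ(z,d(z))}(x,y). -/

import Mathlib

open Metric Set

/-- The triangular ratio metric `s_G(x,y) = sup_{z ∈ ∂G} |x-y|/(|x-z|+|z-y|)`. -/
noncomputable def triangularRatio {n : ℕ} (G : Set (EuclideanSpace ℝ (Fin n)))
    (x y : EuclideanSpace ℝ (Fin n)) : ℝ :=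
  ⨆ z : frontier G, dist x y / (dist x z.1 + dist z.1 y)

/-- Distance to the boundary `d_G(x) = dist(x, ∂G)`. -/
noncomputable def distBd {n : ℕ} (G : Set (EuclideanSpace ℝ (Fin n)))
    (x : EuclideanSpace ℝ (Fin n)) : ℝ :=
  Metric.infDist x (frontier G)

/-- The distance ratio metric `j_G(x,y) = log(1 + |x-y|/min{d_G(x), d_G(y)})`. -/
noncomputable def distRatio {n : ℕ} (G : Set (EuclideanSpace ℝ (Fin n)))
    (x y : EuclideanSpace ℝ (Fin n)) : ℝ :=
  Real.log (1 + dist x y / min (distBd G x) (distBd G y))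

/-- The quantity `p_G(x,y) = |x-y| / √(|x-y|² + 4 d_G(x) d_G(y))`. -/
noncomputable def pMetric {n : ℕ} (G : Set (EuclideanSpace ℝ (Fin n)))
    (x y : EuclideanSpace ℝ (Fin n)) : ℝ :=
  dist x y / Real.sqrt (dist x y ^ 2 + 4 * distBd G x * distBd G y)

/-- For a proper subdomain `G ⊊ ℝⁿ`, `z ∈ G` with `d(z) = dist(z,∂G) > 0`, `0 < λ < 1`,
and all `x, y ∈ 𝔹ⁿ(z, λ d(z))`:
`s_{𝔹ⁿ(z,d(z))}(x,y) ≤ ((1+2λ)/(2(1-λ))) · j_{𝔹ⁿ(z,d(z))}(x,y)`. -/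
private lemma aux_le_infDist {α : Type*} [PseudoMetricSpace α] {x : α} {s : Set α}
    {d : ℝ} (hs : s.Nonempty) (h : ∀ w ∈ s, d ≤ dist x w) : d ≤ Metric.infDist x s := by
  by_contra hlt
  push_neg at hlt
  obtain ⟨w, hw, hwd⟩ := (Metric.infDist_lt_iff hs).1 hlt
  exact absurd (h w hw) (not_le.2 hwd)


theorem s_ball_le_mul_j_ball {n : ℕ}
    (G : Set (EuclideanSpace ℝ (Fin n)))
    (hGopen : IsOpen G) (hGconn : IsConnected G) (hGproper : G ≠ univ)
    (z : EuclideanSpace ℝ (Fin n)) (hz : z ∈ G)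
    (hd : 0 < Metric.infDist z (frontier G))
    (lam : ℝ) (hlam0 : 0 < lam) (hlam1 : lam < 1)
    (x y : EuclideanSpace ℝ (Fin n))
    (hx : x ∈ Metric.ball z (lam * Metric.infDist z (frontier G)))
    (hy : y ∈ Metric.ball z (lam * Metric.infDist z (frontier G))) :
    triangularRatio (Metric.ball z (Metric.infDist z (frontier G))) x y ≤
      ((1 + 2 * lam) / (2 * (1 - lam))) *
        distRatio (Metric.ball z (Metric.infDist z (frontier G))) x y := by
  set r : ℝ := Metric.infDist z (frontier G) with hr
  set C : ℝ := (1 + 2 * lam) / (2 * (1 - lam)) with hC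
  have h1lam : 0 < 1 - lam := by linarith
  have hCpos : 0 < C := by positivity
  rw [mem_ball, dist_comm] at hx hy
  have hfr : frontier (Metric.ball z r) = Metric.sphere z r := frontier_ball z hd.ne'
  rcases Nat.eq_zero_or_pos n with hn | hn
  · -- trivial case : the space is a subsingleton
    subst hn
    haveI : Subsingleton (EuclideanSpace ℝ (Fin 0)) := by
      constructor; intro a b; ext i; exact absurd i.2 (by simp)
    have hxy : x = y := Subsingleton.elim x y
    have hsph : Metric.sphere z r = ∅ := by
      ext w
      simp only [mem_sphere, mem_empty_iff_false, iff_false]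
      rw [Subsingleton.elim w z]
      simp [hd.ne]
    have hT : triangularRatio (Metric.ball z r) x y = 0 := by
      rw [triangularRatio]
      haveI : IsEmpty (frontier (Metric.ball z r) : Set _) := by
        rw [hfr, hsph]; exact Set.isEmpty_coe_sort.2 rfl
      exact Real.iSup_of_isEmpty _
    have hJ : distRatio (Metric.ball z r) x y = 0 := by
      rw [distRatio, hxy]
      simp
    rw [hT, hJ, mul_zero]
  · haveI : Nonempty (Fin n) := ⟨⟨0, hn⟩⟩
    haveI : Nontrivial (EuclideanSpace ℝ (Fin n)) := inferInstance
    have hsph : (Metric.sphere z r).Nonempty := NormedSpace.sphere_nonempty.2 hd.le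
    haveI hne : Nonempty (frontier (Metric.ball z r) : Set _) := by
      rw [hfr]; exact hsph.coe_sort
    -- lower bounds for boundary distances
    have hbd : ∀ u : EuclideanSpace ℝ (Fin n), dist z u < lam * r →
        (1 - lam) * r ≤ distBd (Metric.ball z r) u := by
      intro u hu
      rw [distBd, hfr]
      refine aux_le_infDist hsph fun w hw => ?_
      have hwz : dist z w = r := by rw [mem_sphere, dist_comm] at hw; exact hw
      have := dist_triangle z u w
      linarith
    have hmx := hbd x hx
    have hmy := hbd y hy
    set m : ℝ := min (distBd (Metric.ball z r) x) (distBd (Metric.ball z r) y) with hm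
    have hmlb : (1 - lam) * r ≤ m := le_min hmx hmy
    have hmpos : 0 < m := lt_of_lt_of_le (by positivity) hmlb
    set t : ℝ := dist x y / m with ht
    have ht0 : 0 ≤ t := by positivity
    have hxy2 : dist x y ≤ 2 * lam * r := by
      have := dist_triangle x z y
      rw [dist_comm x z] at this
      linarith
    -- 1 + t ≤ (1 + 2lam)/(1 - lam) = 2C
    have h2C : 1 + t ≤ 2 * C := by
      have h2C' : 2 * C = (1 + 2 * lam) / (1 - lam) := by
        rw [hC]; field_simp
      rw [h2C']
      have heq : (1:ℝ) + t = (m + dist x y) / m := by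
        rw [ht]; field_simp
      rw [heq, div_le_div_iff₀ hmpos h1lam]
      nlinarith [mul_le_mul_of_nonneg_right hxy2 h1lam.le,
        mul_le_mul_of_nonneg_left hmlb (by positivity : (0:ℝ) ≤ 3 * lam),
        mul_nonneg (mul_nonneg hlam0.le h1lam.le) hd.le]
    -- Step 1 : triangularRatio ≤ dist x y / (2 * m)
    have hS : triangularRatio (Metric.ball z r) x y ≤ dist x y / (2 * m) := by
      rw [triangularRatio]
      refine ciSup_le fun w => ?_
      have hw1 : distBd (Metric.ball z r) x ≤ dist x w.1 :=
        Metric.infDist_le_dist_of_mem w.2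
      have hw2 : distBd (Metric.ball z r) y ≤ dist y w.1 :=
        Metric.infDist_le_dist_of_mem w.2
      rw [dist_comm y w.1] at hw2
      have hden : 2 * m ≤ dist x w.1 + dist w.1 y := by
        have := min_le_left (distBd (Metric.ball z r) x) (distBd (Metric.ball z r) y)
        have := min_le_right (distBd (Metric.ball z r) x) (distBd (Metric.ball z r) y)
        rw [← hm] at *
        linarith
      exact div_le_div_of_nonneg_left dist_nonneg (by linarith) hden
    -- Step 2 : log lower bound
    have hlog : t / (1 + t) ≤ Real.log (1 + t) := by
      have h1t : 0 < 1 + t := by linarith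
      have := Real.one_sub_inv_le_log_of_pos h1t
      have hinv : (1 + t)⁻¹ = 1 - t / (1 + t) := by field_simp; ring
      rw [hinv] at this
      linarith
    -- chain
    have hJ : distRatio (Metric.ball z r) x y = Real.log (1 + t) := rfl
    rw [hJ]
    refine le_trans hS ?_
    have hstep : dist x y / (2 * m) = t / 2 := by
      rw [ht, div_div, mul_comm]
    rw [hstep]
    have h2 : t / 2 ≤ C * (t / (1 + t)) := by
      have h1t : 0 < 1 + t := by linarith
      have heq : C * (t / (1 + t)) = C * t / (1 + t) := by ring
      rw [heq, div_le_div_iff₀ (by norm_num : (0:ℝ) < 2) h1t]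
      nlinarith [mul_le_mul_of_nonneg_left h2C ht0]
    exact le_trans h2 (by
      have := mul_le_mul_of_nonneg_left hlog hCpos.le
      linarith)
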